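/- arXiv:2603.24534 — 2 statements merged into one kernel-verified Lean document; each statement's English description precedes it below -/
import Mathlib

section
/- Let n ≥ 2, Δ̃ ∈ ℝ and Ã ∈ Λ^{n−2}(ℝ^n)*, and define the split frame E^a := e^{Δ̃}·(dy^a, dy^a ∧ s(Ã)) ∈ W and E'^a := e^{Δ̃}·(0, ι_{e_a}vol) ∈ W for a = 1,…,n. Then B(E^a, E^b) = 0, B(E'^a, E'^b) = 0, and B(E^a, E'^b) = e^{2Δ̃} δ^{ab}·vol for all a, b, and the 2n elements {E^a, E'^a} form a basis of W. (Thus the split frame consists of two B-isotropic subspaces dually paired by B, realising the split signature of the Spin(n,n)-invariant inner product.) -/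
open scoped BigOperators

noncomputable section

/-- `ℝ^n` -/
abbrev Vn (n : ℕ) : Type := Fin n → ℝ

/-- alternating `k`-forms on `ℝ^n`, i.e. `Λ^k (ℝ^n)^*` (also used as a model of the space
`Λ^k ℝ^n` of `k`-vectors, a `k`-vector being recorded through its components
`β^{i_1…i_k} = β(e_{i_1},…,e_{i_k})` with respect to the standard basis). -/
abbrev Form (n k : ℕ) : Type := (Vn n) [⋀^Fin k]→ₗ[ℝ] ℝ

/-- the standard basis vector `e_m` of `ℝ^n` -/
def ee {n : ℕ} (m : Fin n) : Vn n := Pi.single m 1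

/-- the determinant (volume) form `vol = dy^1 ∧ ⋯ ∧ dy^n` -/
def vol (n : ℕ) : Form n n := (Pi.basisFun ℝ (Fin n)).det

/-- regard a covector as a `1`-form -/
def oneForm {n : ℕ} (α : Module.Dual ℝ (Vn n)) : Form n 1 :=
  AlternatingMap.ofSubsingleton ℝ (Vn n) ℝ (0 : Fin 1) α

/-- the dual basis covector `dy^m`, as a `1`-form -/
def dy {n : ℕ} (m : Fin n) : Form n 1 := oneForm (LinearMap.proj m)

/-- re-index a form along an equality of degrees -/
def Form.castDeg {n a b : ℕ} (h : a = b) (ω : Form n a) : Form n b :=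
  ω.domDomCongr (finCongr h)

/-- the wedge product of alternating forms (shuffle convention, so that
`dy^1 ∧ ⋯ ∧ dy^n = vol` and `(α ∧ ω)(v_0,…,v_k) = ∑_i (-1)^i α(v_i) ω(v_0,…,v̂_i,…,v_k)`
for a `1`-form `α`) -/
def wedge {n a b : ℕ} (ω : Form n a) (τ : Form n b) : Form n (a + b) :=
  ((TensorProduct.lid ℝ ℝ).toLinearMap.compAlternatingMap (ω.domCoprod τ)).domDomCongr
    finSumFinEquiv

/-- the interior product `ι_{e_m} ω = ω(e_m, ·, …, ·)`; `ι_{e_m} vol` is the flat-space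
Hodge dual `⋆ dy^m` -/
def iotaE {n k : ℕ} (m : Fin n) (ω : Form n (k + 1)) : Form n k := ω.curryLeft (ee m)

/-- `W := (ℝ^n)^* ⊕ Λ^{n-1}(ℝ^n)^*`, for `n = N + 1` -/
abbrev Wsp (N : ℕ) : Type := Form (N + 1) 1 × Form (N + 1) N

/-- the `Λ^n(ℝ^n)^*`-valued symmetric pairing `B((η,η̃),(η',η̃')) := η ∧ η̃' + η' ∧ η̃`
(the `Spin(n,n)`-invariant inner product on the bundle `X`). -/
def Bf {N : ℕ} (Y Y' : Wsp N) : Form (N + 1) (N + 1) :=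
  Form.castDeg (Nat.add_comm 1 N) (wedge Y.1 Y'.2 + wedge Y'.1 Y.2)

/-- contraction of a list of `k` vectors into the first `k` arguments of a `(q+k)`-form -/
def mcontract {n : ℕ} : {k q : ℕ} → (Fin k → Vn n) → Form n (q + k) → Form n q
  | 0, _, _, ω => ω
  | (k + 1), q, u, ω => mcontract (k := k) (q := q) (fun j => u j.succ) (ω.curryLeft (u 0))

/-- interior product `ι_β ω` of a `k`-vector `β` (given through its components
`β^{i_1…i_k} = β(e_{i_1},…,e_{i_k})`) into the first `k` arguments of a `(q+k)`-form `ω`: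
`(ι_β ω) = (1/k!) ∑ β^{i_1…i_k} ω(e_{i_1},…,e_{i_k},·,…,·)`. -/
def contract {n k q : ℕ} (β : Form n k) (ω : Form n (q + k)) : Form n q :=
  ((Nat.factorial k : ℕ) : ℝ)⁻¹ • ∑ I : Fin k → Fin n,
    β (fun j => ee (I j)) • mcontract (fun j => ee (I j)) ω

/-- `s(λ) := (-1)^{⌊p/2⌋} λ` on `p`-forms -/
def sform {n k : ℕ} (ω : Form n k) : Form n k := ((-1 : ℝ) ^ (k / 2)) • ω

/-- the derivation action `ρ(r)` of `r ∈ End(ℝ^n)` on forms, extending `α ↦ -α∘r`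
on covectors; concretely `ρ(r)ω = -∑_{a,b} r^a{}_b · dy^b ∧ ι_{e_a}ω`. -/
def rho {n : ℕ} (r : Module.End ℝ (Vn n)) : {k : ℕ} → Form n k → Form n k
  | 0, _ => 0
  | (s + 1), ω =>
      -∑ a : Fin n, ∑ b : Fin n,
        r (ee b) a • Form.castDeg (Nat.add_comm 1 s) (wedge (dy b) (ω.curryLeft (ee a)))

/-- the derivation action `ρ̂(r)` of `r ∈ End(ℝ^n)` on multivectors (represented through
their components as alternating maps), extending `v ↦ r v` on vectors;
concretely `ρ̂(r)β = ∑_{a,b} r^b{}_a · dy^b ∧ ι_{e_a}β` in the components model. -/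
def rhoHat {n : ℕ} (r : Module.End ℝ (Vn n)) : {k : ℕ} → Form n k → Form n k
  | 0, _ => 0
  | (s + 1), β =>
      ∑ a : Fin n, ∑ b : Fin n,
        r (ee a) b • Form.castDeg (Nat.add_comm 1 s) (wedge (dy b) (β.curryLeft (ee a)))

/-- the full contraction `⟨β, b⟩ = (1/k!) β^{i_1…i_k} b_{i_1…i_k}` -/
def fullContract {n k : ℕ} (β b : Form n k) : ℝ :=
  ((Nat.factorial k : ℕ) : ℝ)⁻¹ * ∑ I : Fin k → Fin n,
    β (fun j => ee (I j)) * b (fun j => ee (I j))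

/-- the single-index partial contraction `C(β,b)^a{}_c = (1/m!) β^{a j_1…j_m} b_{c j_1…j_m}`
of a degree-`(m+1)` multivector `β` and form `b`, as an endomorphism of `ℝ^n`. -/
def Cmat {n m : ℕ} (β b : Form n (m + 1)) : Module.End ℝ (Vn n) :=
  Matrix.toLin' (Matrix.of fun a c : Fin n =>
    ((Nat.factorial m : ℕ) : ℝ)⁻¹ * ∑ J : Fin m → Fin n,
      β (Fin.cons (ee a) fun j => ee (J j)) * b (Fin.cons (ee c) fun j => ee (J j)))

/-- the inner product on `k`-forms induced by the standard inner product of `ℝ^n`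
(the `dy^{i_1} ∧ ⋯ ∧ dy^{i_k}`, `i_1 < ⋯ < i_k`, are orthonormal; equivalently on
`(n-1)`-forms it is the inner product making `ι_{e_1}vol, …, ι_{e_n}vol` orthonormal). -/
def ipk {n k : ℕ} (ω ω' : Form n k) : ℝ :=
  ((Nat.factorial k : ℕ) : ℝ)⁻¹ * ∑ I : Fin k → Fin n,
    ω (fun j => ee (I j)) * ω' (fun j => ee (I j))

section SplitFrameAux
open Equiv
open scoped TensorProduct

section aux
lemma ee_eq_basisFun {n : ℕ} (i : Fin n) : ee i = Pi.basisFun ℝ (Fin n) i := by simp [ee]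

lemma succAbove_val {n : ℕ} (p : Fin (n+1)) (i : Fin n) :
    (p.succAbove i : ℕ) = if (i:ℕ) < (p:ℕ) then (i:ℕ) else (i:ℕ)+1 := by
  rcases lt_or_ge ((i : ℕ)) ((p : ℕ)) with h | h
  · rw [Fin.succAbove_of_castSucc_lt _ _ (by simpa [Fin.lt_def] using h), if_pos h]; simp
  · rw [Fin.succAbove_of_le_castSucc _ _ (by simpa [Fin.le_def] using h), if_neg (not_lt.mpr h)]
    simp

lemma top_ext {n : ℕ} {f g : Form n n} (h : (f fun i => ee i) = g fun i => ee i) : f = g := by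
  apply Module.Basis.ext_alternating (Pi.basisFun ℝ (Fin n))
  intro v hv
  have hb := Finite.injective_iff_bijective.mp hv
  have hvv : (fun i => (Pi.basisFun ℝ (Fin n)) (v i))
      = (fun i => ee i) ∘ ⇑(Equiv.ofBijective v hb) := by
    funext i; simp [ee_eq_basisFun]
  rw [hvv, AlternatingMap.map_perm, AlternatingMap.map_perm, h]

lemma vol_ee {n : ℕ} : (vol n fun i => ee i) = 1 := by
  have h : (fun i => ee i) = ⇑(Pi.basisFun ℝ (Fin n)) := by funext i; exact ee_eq_basisFun i
  rw [vol, h, Module.Basis.det_self]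

lemma units_smul_real (s : ℤˣ) (r : ℝ) : s • r = ((s : ℤ) : ℝ) * r := by
  rw [Units.smul_def, zsmul_eq_mul]

lemma dy_ee {n : ℕ} (c b : Fin n) : dy c (fun _ => ee b) = if b = c then 1 else 0 := by
  simp [dy, oneForm, ee, Pi.single_apply, eq_comm]

lemma alt_sum_apply {n k : ℕ} {ι : Type*} (s : Finset ι) (f : ι → Form n k) (v : Fin k → Vn n) :
    (∑ i ∈ s, f i) v = ∑ i ∈ s, f i v := by
  induction s using Finset.cons_induction with
  | empty => simp
  | cons a s ha ih => rw [Finset.sum_cons, Finset.sum_cons, AlternatingMap.add_apply, ih]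

lemma iotaE_apply {n k : ℕ} (m : Fin n) (ω : Form n (k+1)) (v : Fin k → Vn n) :
    iotaE m ω v = ω (Fin.cons (ee m) v) := rfl

lemma castDeg_apply {n a b : ℕ} (h : a = b) (ω : Form n a) (u : Fin b → Vn n) :
    Form.castDeg h ω u = ω (fun p => u (Fin.cast h p)) := rfl

lemma vol_cons_succAbove {m : ℕ} (c b : Fin (m+2)) :
    vol (m+2) (Fin.cons (ee c) (fun j => ee (b.succAbove j))) =
      if c = b then (-1:ℝ)^(b:ℕ) else 0 := by
  by_cases hcb : c = b
  · subst hcb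
    have hfun : Fin.cons (ee c) (fun j => ee (c.succAbove j))
        = (fun i => ee i) ∘ ⇑(c.cycleRange.symm) := by
      funext i
      induction i using Fin.cases with
      | zero => simp [Fin.cycleRange_symm_zero]
      | succ j => simp [Fin.cycleRange_symm_succ]
    rw [if_pos rfl, hfun, AlternatingMap.map_perm, vol_ee,
      show c.cycleRange.symm = c.cycleRange⁻¹ from rfl, Equiv.Perm.sign_inv,
      Fin.sign_cycleRange, units_smul_real]
    push_cast
    ring
  · obtain ⟨z, hz⟩ := Fin.exists_succAbove_eq_iff.mpr (show c ≠ b from hcb)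
    rw [if_neg hcb]
    refine AlternatingMap.map_eq_zero_of_eq _ _ (i := 0) (j := z.succ) ?_ ?_
    · rw [Fin.cons_zero, Fin.cons_succ, hz]
    · exact (Fin.succ_ne_zero z).symm

lemma oneform_decomp {n : ℕ} (η : Form n 1) :
    η = ∑ a : Fin n, η (fun _ => ee a) • dy a := by
  apply Module.Basis.ext_alternating (Pi.basisFun ℝ (Fin n))
  intro v _
  have hb : (fun i : Fin 1 => (Pi.basisFun ℝ (Fin n)) (v i)) = fun _ => ee (v 0) := by
    funext i; rw [Subsingleton.elim i 0, ← ee_eq_basisFun]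
  rw [hb, alt_sum_apply]
  simp only [AlternatingMap.smul_apply, dy_ee, smul_eq_mul, mul_ite, mul_one, mul_zero]
  rw [Finset.sum_ite_eq Finset.univ (v 0) (fun a => η fun _ => ee a)]
  simp
end aux
open Equiv
open scoped TensorProduct

def Efin (k : ℕ) : (Fin 1 ⊕ Fin k) ≃ Fin (k+1) := finSumFinEquiv.trans (finCongr (Nat.add_comm 1 k))

lemma Efin_inl (k : ℕ) (i : Fin 1) : Efin k (Sum.inl i) = 0 := by
  have : i = 0 := Subsingleton.elim i 0
  subst this
  apply Fin.ext
  simp [Efin]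

lemma Efin_inr (k : ℕ) (j : Fin k) : Efin k (Sum.inr j) = j.succ := by
  apply Fin.ext
  simp [Efin]

def Pperm {k : ℕ} (i : Fin (k+1)) : Perm (Fin 1 ⊕ Fin k) :=
  ((Efin k).trans (i.cycleRange).symm).trans (Efin k).symm

lemma Efin_Pperm {k : ℕ} (i : Fin (k+1)) (x : Fin 1 ⊕ Fin k) :
    Efin k (Pperm i x) = (i.cycleRange).symm (Efin k x) := by
  simp [Pperm]

lemma sign_Pperm {k : ℕ} (i : Fin (k+1)) : Perm.sign (Pperm i) = (-1)^(i:ℕ) := by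
  rw [Pperm, Equiv.Perm.sign_trans_trans_symm]
  simp [Fin.sign_cycleRange]

lemma fix_inl_mem_range {k : ℕ} (π : Perm (Fin 1 ⊕ Fin k)) (h : π (Sum.inl 0) = Sum.inl 0) :
    π ∈ (Perm.sumCongrHom (Fin 1) (Fin k)).range := by
  have hinv : π⁻¹ (Sum.inl 0) = Sum.inl 0 := by
    rw [Perm.inv_eq_iff_eq]; exact h.symm
  have hex : ∀ (ρ : Perm (Fin 1 ⊕ Fin k)), ρ (Sum.inl 0) = Sum.inl 0 →
      ∀ j : Fin k, ∃ c, ρ (Sum.inr j) = Sum.inr c := by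
    intro ρ hρ j
    rcases hc : ρ (Sum.inr j) with c | c
    · exfalso
      have hc0 : (Sum.inl c : Fin 1 ⊕ Fin k) = Sum.inl 0 := by rw [Subsingleton.elim c 0]
      have := ρ.injective (hc.trans (hc0.trans hρ.symm))
      simp at this
    · exact ⟨c, rfl⟩
  choose g hg using hex π h
  choose g' hg' using hex π⁻¹ hinv
  have hgl : Function.LeftInverse g' g := by
    intro j
    have : π⁻¹ (π (Sum.inr j)) = Sum.inr j := Equiv.symm_apply_apply π _
    rw [hg j, hg' (g j)] at this
    exact Sum.inr.inj this
  have hgr : Function.RightInverse g' g := by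
    intro j
    have : π (π⁻¹ (Sum.inr j)) = Sum.inr j := Equiv.apply_symm_apply π _
    rw [hg' j, hg (g' j)] at this
    exact Sum.inr.inj this
  refine ⟨(1, ⟨g, g', hgl, hgr⟩), ?_⟩
  apply Equiv.ext
  intro x
  rcases x with i | j
  · rw [Subsingleton.elim i 0]
    simp [Perm.sumCongrHom, h]
  · simpa [Perm.sumCongrHom] using (hg j).symm

lemma Pperm_inl {k : ℕ} (i : Fin (k+1)) : Pperm i (Sum.inl 0) = (Efin k).symm i := by
  have : Efin k (Pperm i (Sum.inl 0)) = i := by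
    rw [Efin_Pperm, Efin_inl, Fin.cycleRange_symm_zero]
  exact (Equiv.eq_symm_apply _).mpr this

lemma Pperm_class_bij (k : ℕ) :
    Function.Bijective (fun i : Fin (k+1) =>
      (QuotientGroup.mk (Pperm i) : Perm.ModSumCongr (Fin 1) (Fin k))) := by
  constructor
  · intro i i' h
    rw [QuotientGroup.eq] at h
    obtain ⟨⟨s1, s2⟩, hs⟩ := h
    have hmul : Pperm i' = Pperm i * Perm.sumCongrHom _ _ (s1, s2) :=
      (inv_mul_eq_iff_eq_mul.mp hs.symm)
    have h0 : Pperm i' (Sum.inl 0) = Pperm i (Sum.inl 0) := by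
      rw [hmul, Perm.mul_apply]
      congr 1
      simp [Perm.sumCongrHom, Subsingleton.elim (s1 0) 0]
    have := congrArg (Efin k) h0
    rw [Efin_Pperm, Efin_Pperm, Efin_inl, Fin.cycleRange_symm_zero,
      Fin.cycleRange_symm_zero] at this
    exact this.symm
  · intro q
    obtain ⟨σ, rfl⟩ := QuotientGroup.mk_surjective q
    refine ⟨Efin k (σ (Sum.inl 0)), ?_⟩
    rw [QuotientGroup.eq]
    apply fix_inl_mem_range
    have h3 : Pperm (Efin k (σ (Sum.inl 0))) (Sum.inl 0) = σ (Sum.inl 0) := by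
      rw [Pperm_inl, Equiv.symm_apply_apply]
    rw [Perm.mul_apply, Perm.inv_eq_iff_eq]
    exact h3.symm

theorem wedge_one_apply {n k : ℕ} (α : Form n 1) (ω : Form n k) (u : Fin (k+1) → Vn n) :
    wedge α ω (fun p => u (Fin.cast (Nat.add_comm 1 k) p)) =
      ∑ i : Fin (k+1), (-1 : ℝ)^(i:ℕ) * (α (fun _ => u i) * ω (fun j => u (i.succAbove j))) := by
  classical
  rw [wedge, AlternatingMap.domDomCongr_apply, LinearMap.compAlternatingMap_apply]
  have harg : (fun p => u (Fin.cast (Nat.add_comm 1 k) p)) ∘ ⇑finSumFinEquiv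
      = fun x => u (Efin k x) := by
    funext x; simp [Efin]
  rw [harg]
  have h1 : (α.domCoprod ω) (fun x => u (Efin k x))
      = ∑ σ : Perm.ModSumCongr (Fin 1) (Fin k),
          AlternatingMap.domCoprod.summand α ω σ (fun x => u (Efin k x)) := by
    have h := AlternatingMap.domCoprod_coe α ω
    calc (α.domCoprod ω) (fun x => u (Efin k x))
        = (↑(α.domCoprod ω) : MultilinearMap ℝ (fun _ : Fin 1 ⊕ Fin k => Vn n) (ℝ ⊗[ℝ] ℝ))
            (fun x => u (Efin k x)) := rfl
      _ = _ := by rw [h, MultilinearMap.sum_apply]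
  rw [h1, map_sum]
  refine (Fintype.sum_bijective _ (Pperm_class_bij k) _ _ ?_).symm
  intro i
  rw [show (QuotientGroup.mk (Pperm i) : Perm.ModSumCongr (Fin 1) (Fin k))
      = Quotient.mk'' (Pperm i) from rfl]
  rw [AlternatingMap.domCoprod.summand_mk'']
  rw [MultilinearMap.smul_apply, MultilinearMap.domDomCongr_apply,
    MultilinearMap.domCoprod_apply]
  have hα : (fun i1 : Fin 1 => u (Efin k (Pperm i (Sum.inl i1))))
      = fun _ : Fin 1 => u i := by
    funext i1
    show u (Efin k (Pperm i (Sum.inl i1))) = u i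
    rw [Efin_Pperm, Efin_inl, Fin.cycleRange_symm_zero]
  have hω : (fun j : Fin k => u (Efin k (Pperm i (Sum.inr j))))
      = fun j => u (i.succAbove j) := by
    funext j
    show u (Efin k (Pperm i (Sum.inr j))) = u (i.succAbove j)
    rw [Efin_Pperm, Efin_inr, Fin.cycleRange_symm_succ]
  rw [sign_Pperm i, Units.smul_def, map_zsmul, hα, hω]
  simp only [TensorProduct.lid_tmul, smul_eq_mul, zsmul_eq_mul,
    AlternatingMap.coe_multilinearMap, LinearEquiv.coe_coe]
  push_cast
  ring

section wedgelin
open scoped TensorProduct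

lemma domCoprod_smul_left {n a b : ℕ} (c : ℝ) (ω : Form n a) (τ : Form n b) :
    (c • ω).domCoprod τ = c • ω.domCoprod τ := by
  rw [← AlternatingMap.domCoprod'_apply, ← AlternatingMap.domCoprod'_apply,
    ← TensorProduct.smul_tmul', map_smul]

lemma domCoprod_smul_right {n a b : ℕ} (c : ℝ) (ω : Form n a) (τ : Form n b) :
    ω.domCoprod (c • τ) = c • ω.domCoprod τ := by
  rw [← AlternatingMap.domCoprod'_apply, ← AlternatingMap.domCoprod'_apply,
    TensorProduct.tmul_smul, map_smul]

lemma wedge_smul_left {n a b : ℕ} (c : ℝ) (ω : Form n a) (τ : Form n b) :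
    wedge (c • ω) τ = c • wedge ω τ := by
  ext v
  simp [wedge, domCoprod_smul_left]

lemma wedge_smul_right {n a b : ℕ} (c : ℝ) (ω : Form n a) (τ : Form n b) :
    wedge ω (c • τ) = c • wedge ω τ := by
  ext v
  simp [wedge, domCoprod_smul_right]

lemma wedge_zero_left {n a b : ℕ} (τ : Form n b) :
    wedge (0 : Form n a) τ = 0 := by
  have h := wedge_smul_left (0:ℝ) (0 : Form n a) τ
  simpa using h

lemma Bf_smul_left {N : ℕ} (c : ℝ) (Y Y' : Wsp N) : Bf (c • Y) Y' = c • Bf Y Y' := by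
  ext v
  simp [Bf, castDeg_apply, wedge_smul_left, wedge_smul_right, Prod.smul_fst, Prod.smul_snd,
    mul_add]

lemma Bf_smul_right {N : ℕ} (c : ℝ) (Y Y' : Wsp N) : Bf Y (c • Y') = c • Bf Y Y' := by
  ext v
  simp [Bf, castDeg_apply, wedge_smul_left, wedge_smul_right, Prod.smul_fst, Prod.smul_snd,
    mul_add]
end wedgelin

lemma wedge_dy_eval {n k : ℕ} (ω : Form n k) (c : Fin n) (u : Fin (k+1) → Fin n) :
    wedge (dy c) ω (fun p => ee (u (Fin.cast (Nat.add_comm 1 k) p))) =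
      ∑ i : Fin (k+1), (if u i = c then (-1:ℝ)^(i:ℕ) else 0)
        * ω (fun j => ee (u (i.succAbove j))) := by
  have h := wedge_one_apply (dy c) ω (fun i => ee (u i))
  refine h.trans (Finset.sum_congr rfl fun i _ => ?_)
  rw [dy_ee]
  split_ifs <;> ring

lemma iotavol_decomp {m : ℕ} (ρ : Form (m+2) (m+1)) :
    ρ = ∑ b : Fin (m+2),
      ((-1:ℝ)^(b:ℕ) * ρ (fun j => ee (b.succAbove j))) • iotaE b (vol (m+2)) := by
  apply Module.Basis.ext_alternating (Pi.basisFun ℝ (Fin (m+2)))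
  intro v hv
  have hb : (fun i : Fin (m+1) => (Pi.basisFun ℝ (Fin (m+2))) (v i)) = fun i => ee (v i) := by
    funext i; rw [← ee_eq_basisFun]
  rw [hb]
  have hmiss : ∃ b : Fin (m+2), ∀ j, v j ≠ b := by
    by_contra hcon
    push_neg at hcon
    have hsurj : Function.Surjective v := fun b => by
      obtain ⟨j, hj⟩ := hcon b; exact ⟨j, hj⟩
    have := Fintype.card_le_of_surjective v hsurj
    simp at this
  obtain ⟨b, hbm⟩ := hmiss
  have hws : ∀ j, ∃ z, b.succAbove z = v j := fun j =>
    Fin.exists_succAbove_eq_iff.mpr (hbm j)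
  choose w hw using hws
  have hwinj : Function.Injective w := by
    intro j j' h
    apply hv
    rw [← hw j, ← hw j', h]
  set π : Equiv.Perm (Fin (m+1)) :=
    Equiv.ofBijective w (Finite.injective_iff_bijective.mp hwinj) with hπ
  have hfact : ∀ (f : Form (m+2) (m+1)), (f fun i => ee (v i))
      = ((Equiv.Perm.sign π : ℤ) : ℝ) * f (fun j => ee (b.succAbove j)) := by
    intro f
    have hcomp : (fun i => ee (v i)) = (fun j => ee (b.succAbove j)) ∘ ⇑π := by
      funext i
      show ee (v i) = ee (b.succAbove (π i))
      rw [show π i = w i from rfl, hw]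
    rw [hcomp, AlternatingMap.map_perm, units_smul_real]
  rw [hfact ρ, alt_sum_apply]
  have hterm : ∀ i : Fin (m+2),
      (((-1:ℝ)^(i:ℕ) * ρ (fun j => ee (i.succAbove j))) • iotaE i (vol (m+2)))
        (fun j => ee (v j))
      = ((-1:ℝ)^(i:ℕ) * ρ (fun j => ee (i.succAbove j)))
          * (((Equiv.Perm.sign π : ℤ) : ℝ) * (if i = b then (-1:ℝ)^(b:ℕ) else 0)) := by
    intro i
    rw [AlternatingMap.smul_apply, smul_eq_mul, hfact (iotaE i (vol (m+2))), iotaE_apply,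
      vol_cons_succAbove]
  rw [Finset.sum_congr rfl (fun i _ => hterm i)]
  rw [Finset.sum_eq_single b]
  · rw [if_pos rfl]
    have hsq : (-1:ℝ)^(b:ℕ) * (-1:ℝ)^(b:ℕ) = 1 := by
      rw [← pow_add]
      exact Even.neg_one_pow ⟨(b:ℕ), rfl⟩
    set s := ((Equiv.Perm.sign π : ℤ) : ℝ)
    set r := ρ (fun j => ee (b.succAbove j))
    linear_combination (-(s * r)) * hsq
  · intro c _ hcb
    rw [if_neg hcb]
    ring
  · intro h
    exact absurd (Finset.mem_univ b) h

lemma succAbove_succAbove_eq {m : ℕ} {a b : Fin (m+2)} {ja jb : Fin (m+1)}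
    (hja : a.succAbove ja = b) (hjb : b.succAbove jb = a) (q : Fin m) :
    a.succAbove (ja.succAbove q) = b.succAbove (jb.succAbove q) := by
  have h1 := congrArg Fin.val hja
  have h2 := congrArg Fin.val hjb
  simp only [succAbove_val] at h1 h2
  apply Fin.ext
  simp only [succAbove_val]
  split_ifs at h1 h2 ⊢ <;> omega

lemma succAbove_parity {m : ℕ} {a b : Fin (m+2)} {ja jb : Fin (m+1)}
    (hja : a.succAbove ja = b) (hjb : b.succAbove jb = a) :
    (-1:ℝ)^(a:ℕ) * (-1:ℝ)^(ja:ℕ) = -((-1:ℝ)^(b:ℕ) * (-1:ℝ)^(jb:ℕ)) := by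
  have hab : (a:ℕ) ≠ (b:ℕ) := by
    intro h
    exact Fin.succAbove_ne a ja (hja.trans (Fin.ext h).symm)
  have h1 := congrArg Fin.val hja
  have h2 := congrArg Fin.val hjb
  simp only [succAbove_val] at h1 h2
  have hodd : ((a:ℕ) + (ja:ℕ) + ((b:ℕ) + (jb:ℕ))) % 2 = 1 := by
    split_ifs at h1 h2 <;> omega
  have hpow : (-1:ℝ)^((a:ℕ) + (ja:ℕ) + ((b:ℕ) + (jb:ℕ))) = -1 :=
    Odd.neg_one_pow (Nat.odd_iff.mpr hodd)
  have hsq : (-1:ℝ)^((b:ℕ)+(jb:ℕ)) * (-1:ℝ)^((b:ℕ)+(jb:ℕ)) = 1 := by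
    rw [← pow_add]
    exact Even.neg_one_pow ⟨(b:ℕ)+(jb:ℕ), rfl⟩
  rw [pow_add, pow_add, pow_add] at hpow
  linear_combination ((-1:ℝ)^(b:ℕ)*(-1:ℝ)^(jb:ℕ)) * hpow
    - ((-1:ℝ)^(a:ℕ)*(-1:ℝ)^(ja:ℕ)) * hsq

lemma Bf_eval_ee {m : ℕ} (Y Y' : Wsp (m+1)) :
    Bf Y Y' (fun i => ee i)
      = wedge Y.1 Y'.2 (fun p => ee (Fin.cast (Nat.add_comm 1 (m+1)) p))
      + wedge Y'.1 Y.2 (fun p => ee (Fin.cast (Nat.add_comm 1 (m+1)) p)) := rfl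

lemma wedge_dy_castdeg_eval {m : ℕ} (A : Form (m+2) m) (c d : Fin (m+2)) :
    wedge (dy c) (Form.castDeg (Nat.add_comm 1 m) (wedge (dy d) (sform A)))
        (fun p => ee (Fin.cast (Nat.add_comm 1 (m+1)) p))
      = ∑ i : Fin (m+2), (if i = c then (-1:ℝ)^(i:ℕ) else 0) *
          ∑ j : Fin (m+1), (if i.succAbove j = d then (-1:ℝ)^(j:ℕ) else 0) *
            sform A (fun q => ee (i.succAbove (j.succAbove q))) := by
  have h0 : wedge (dy c) (Form.castDeg (Nat.add_comm 1 m) (wedge (dy d) (sform A)))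
      (fun p => ee ((fun i : Fin (m+2) => i) (Fin.cast (Nat.add_comm 1 (m+1)) p)))
      = ∑ i : Fin (m+2), (if (fun i : Fin (m+2) => i) i = c then (-1:ℝ)^(i:ℕ) else 0) *
          (Form.castDeg (Nat.add_comm 1 m) (wedge (dy d) (sform A)))
            (fun j => ee ((fun i : Fin (m+2) => i) (i.succAbove j))) :=
    wedge_dy_eval _ c (fun i => i)
  refine h0.trans (Finset.sum_congr rfl fun i _ => ?_)
  congr 1
  exact wedge_dy_eval (sform A) d (fun j => i.succAbove j)

lemma Fsum_self_zero {m : ℕ} (A : Form (m+2) m) (a : Fin (m+2)) :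
    (∑ j : Fin (m+1), (if a.succAbove j = a then (-1:ℝ)^(j:ℕ) else 0) *
      sform A (fun q => ee (a.succAbove (j.succAbove q)))) = 0 := by
  refine Finset.sum_eq_zero fun j _ => ?_
  rw [if_neg (Fin.succAbove_ne a j)]
  ring

lemma Fsum_collapse {m : ℕ} (A : Form (m+2) m) {a b : Fin (m+2)} {ja : Fin (m+1)}
    (hja : a.succAbove ja = b) :
    (∑ j : Fin (m+1), (if a.succAbove j = b then (-1:ℝ)^(j:ℕ) else 0) *
      sform A (fun q => ee (a.succAbove (j.succAbove q))))
    = (-1:ℝ)^(ja:ℕ) * sform A (fun q => ee (a.succAbove (ja.succAbove q))) := by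
  rw [Finset.sum_eq_single ja]
  · rw [if_pos hja]
  · intro j _ hj
    rw [if_neg, zero_mul]
    intro hcon
    exact hj (Fin.succAbove_right_injective (hcon.trans hja.symm))
  · intro h
    exact absurd (Finset.mem_univ ja) h

lemma outer_collapse {m : ℕ} (F : Fin (m+2) → ℝ) (a : Fin (m+2)) :
    (∑ i : Fin (m+2), (if i = a then (-1:ℝ)^(i:ℕ) else 0) * F i) = (-1:ℝ)^(a:ℕ) * F a := by
  rw [Finset.sum_eq_single a]
  · rw [if_pos rfl]
  · intro i _ hi
    rw [if_neg hi, zero_mul]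
  · intro h
    exact absurd (Finset.mem_univ a) h

lemma Bf_EE_base {m : ℕ} (A : Form (m+2) m) (a b : Fin (m+2)) :
    Bf ((dy a, Form.castDeg (Nat.add_comm 1 m) (wedge (dy a) (sform A))) : Wsp (m+1))
       ((dy b, Form.castDeg (Nat.add_comm 1 m) (wedge (dy b) (sform A))) : Wsp (m+1))
      = 0 := by
  apply top_ext
  rw [AlternatingMap.zero_apply, Bf_eval_ee]
  show wedge (dy a) (Form.castDeg (Nat.add_comm 1 m) (wedge (dy b) (sform A))) _
      + wedge (dy b) (Form.castDeg (Nat.add_comm 1 m) (wedge (dy a) (sform A))) _ = 0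
  rw [wedge_dy_castdeg_eval, wedge_dy_castdeg_eval, outer_collapse, outer_collapse]
  by_cases hab : a = b
  · subst hab
    rw [Fsum_self_zero]
    ring
  · obtain ⟨ja, hja⟩ := Fin.exists_succAbove_eq_iff.mpr (Ne.symm hab)
    obtain ⟨jb, hjb⟩ := Fin.exists_succAbove_eq_iff.mpr (show a ≠ b from hab)
    rw [Fsum_collapse A hja, Fsum_collapse A hjb]
    have htup : (fun q => ee (a.succAbove (ja.succAbove q)))
        = (fun q : Fin m => ee (b.succAbove (jb.succAbove q))) := by
      funext q
      rw [succAbove_succAbove_eq hja hjb q]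
    rw [htup]
    have hpar := succAbove_parity hja hjb
    set t := sform A (fun q => ee (b.succAbove (jb.succAbove q)))
    linear_combination t * hpar

lemma Bf_E'E'_base {m : ℕ} (x y : Form (m+2) (m+1)) :
    Bf (((0 : Form (m+2) 1), x) : Wsp (m+1)) (((0 : Form (m+2) 1), y) : Wsp (m+1)) = 0 := by
  ext v
  simp [Bf, castDeg_apply, wedge_zero_left]

lemma Bf_EE'_base {m : ℕ} (A : Form (m+2) m) (a b : Fin (m+2)) :
    Bf ((dy a, Form.castDeg (Nat.add_comm 1 m) (wedge (dy a) (sform A))) : Wsp (m+1))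
       (((0 : Form (m+2) 1), iotaE b (vol (m+2))) : Wsp (m+1))
      = (if a = b then (1:ℝ) else 0) • vol (m+2) := by
  apply top_ext
  rw [AlternatingMap.smul_apply, vol_ee, Bf_eval_ee]
  show wedge (dy a) (iotaE b (vol (m+2))) (fun p => ee (Fin.cast (Nat.add_comm 1 (m+1)) p))
      + wedge (0 : Form (m+2) 1) (Form.castDeg (Nat.add_comm 1 m) (wedge (dy a) (sform A)))
          (fun p => ee (Fin.cast (Nat.add_comm 1 (m+1)) p)) = _
  rw [wedge_zero_left, AlternatingMap.zero_apply, add_zero]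
  have h0 : wedge (dy a) (iotaE b (vol (m+2)))
      (fun p => ee ((fun i : Fin (m+2) => i) (Fin.cast (Nat.add_comm 1 (m+1)) p)))
      = ∑ i : Fin (m+2), (if (fun i : Fin (m+2) => i) i = a then (-1:ℝ)^(i:ℕ) else 0) *
          (iotaE b (vol (m+2))) (fun j => ee ((fun i : Fin (m+2) => i) (i.succAbove j))) :=
    wedge_dy_eval _ a (fun i => i)
  rw [h0]
  have hterm : ∀ i : Fin (m+2),
      (iotaE b (vol (m+2))) (fun j => ee (i.succAbove j))
        = if b = i then (-1:ℝ)^(i:ℕ) else 0 := fun i => by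
    rw [iotaE_apply, vol_cons_succAbove]
  rw [Finset.sum_congr rfl (fun i _ => by rw [hterm i]), outer_collapse]
  by_cases hab : a = b
  · subst hab
    rw [if_pos rfl, if_pos rfl, smul_eq_mul, mul_one, ← pow_add]
    exact Even.neg_one_pow ⟨(a:ℕ), rfl⟩
  · rw [if_neg (fun h => hab h.symm), if_neg hab]
    simp

end SplitFrameAux

/-- For `n ≥ 2` (written `n = m + 2`), `Δ̃ ∈ ℝ` and `Ã ∈ Λ^{n-2}(ℝ^n)^*`,
the split frame `E^a := e^{Δ̃}·(dy^a, dy^a ∧ s(Ã))`, `E'^a := e^{Δ̃}·(0, ι_{e_a}vol)`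
satisfies `B(E^a, E^b) = 0`, `B(E'^a, E'^b) = 0`, `B(E^a, E'^b) = e^{2Δ̃} δ^{ab}·vol`, and
the `2n` elements `{E^a, E'^a}` form a basis of `W`. -/
theorem split_frame_isotropic (m : ℕ) (Δ : ℝ) (A : Form (m + 2) m) :
    let E : Fin (m + 2) → Wsp (m + 1) := fun a =>
      Real.exp Δ •
        ((dy a, Form.castDeg (Nat.add_comm 1 m) (wedge (dy a) (sform A))) : Wsp (m + 1))
    let E' : Fin (m + 2) → Wsp (m + 1) := fun a =>
      Real.exp Δ • ((0, iotaE a (vol (m + 2))) : Wsp (m + 1))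
    (∀ a b : Fin (m + 2), Bf (E a) (E b) = 0) ∧
    (∀ a b : Fin (m + 2), Bf (E' a) (E' b) = 0) ∧
    (∀ a b : Fin (m + 2),
      Bf (E a) (E' b) = (Real.exp (2 * Δ) * if a = b then 1 else 0) • vol (m + 2)) ∧
    LinearIndependent ℝ (Sum.elim E E') ∧
    Submodule.span ℝ (Set.range (Sum.elim E E')) = ⊤ := by
  intro E E'
  have hEdef : ∀ a : Fin (m+2), E a = Real.exp Δ •
      ((dy a, Form.castDeg (Nat.add_comm 1 m) (wedge (dy a) (sform A))) : Wsp (m + 1)) :=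
    fun a => rfl
  have hE'def : ∀ a : Fin (m+2), E' a = Real.exp Δ •
      (((0 : Form (m+2) 1), iotaE a (vol (m + 2))) : Wsp (m + 1)) := fun a => rfl
  have hexp2 : Real.exp Δ * Real.exp Δ = Real.exp (2 * Δ) := by
    rw [← Real.exp_add]; ring_nf
  refine ⟨?_, ?_, ?_, ?_, ?_⟩
  · intro a b
    rw [hEdef, hEdef, Bf_smul_left, Bf_smul_right, Bf_EE_base, smul_zero, smul_zero]
  · intro a b
    rw [hE'def, hE'def, Bf_smul_left, Bf_smul_right, Bf_E'E'_base, smul_zero, smul_zero]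
  · intro a b
    rw [hEdef, hE'def, Bf_smul_left, Bf_smul_right, Bf_EE'_base, smul_smul, smul_smul, hexp2]
  · rw [Fintype.linearIndependent_iff]
    intro g hg
    rw [Fintype.sum_sum_type] at hg
    have hfst : ∀ c : Fin (m+2), g (Sum.inl c) = 0 := by
      intro c
      have h1 : (∑ a : Fin (m+2), g (Sum.inl a) • (Real.exp Δ • dy a)) = (0 : Form (m+2) 1) := by
        have h := congrArg Prod.fst hg
        rw [Prod.fst_add, Prod.fst_sum, Prod.fst_sum] at h
        have h2 : ∀ b : Fin (m+2), (g (Sum.inr b) • Sum.elim E E' (Sum.inr b)).1 = 0 := by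
          intro b
          show g (Sum.inr b) • (Real.exp Δ • (0 : Form (m+2) 1)) = 0
          rw [smul_zero, smul_zero]
        rw [Finset.sum_congr rfl (fun b _ => h2 b), Finset.sum_const_zero, add_zero] at h
        exact h
      have h3 : (∑ a : Fin (m+2), g (Sum.inl a) • (Real.exp Δ • dy a)) (fun _ => ee c) = 0 := by
        rw [h1]; rfl
      rw [alt_sum_apply] at h3
      have h4 : ∀ a : Fin (m+2), (g (Sum.inl a) • (Real.exp Δ • dy a)) (fun _ => ee c)
          = if c = a then g (Sum.inl a) * Real.exp Δ else 0 := by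
        intro a
        rw [AlternatingMap.smul_apply, AlternatingMap.smul_apply, dy_ee, smul_eq_mul,
          smul_eq_mul]
        split_ifs <;> ring
      rw [Finset.sum_congr rfl (fun a _ => h4 a),
        Finset.sum_ite_eq Finset.univ c (fun a => g (Sum.inl a) * Real.exp Δ)] at h3
      simp only [Finset.mem_univ, if_true, mul_eq_zero] at h3
      rcases h3 with h3 | h3
      · exact h3
      · exact absurd h3 (Real.exp_ne_zero Δ)
    have hsnd : ∀ c : Fin (m+2), g (Sum.inr c) = 0 := by
      intro c
      have h1 : (∑ b : Fin (m+2), g (Sum.inr b) • (Real.exp Δ • iotaE b (vol (m+2))))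
          = (0 : Form (m+2) (m+1)) := by
        have h := congrArg Prod.snd hg
        rw [Prod.snd_add, Prod.snd_sum, Prod.snd_sum] at h
        have h2 : ∀ a : Fin (m+2), (g (Sum.inl a) • Sum.elim E E' (Sum.inl a)).2 = 0 := by
          intro a
          show g (Sum.inl a) •
            (Real.exp Δ • Form.castDeg (Nat.add_comm 1 m) (wedge (dy a) (sform A))) = 0
          rw [hfst a, zero_smul]
        rw [Finset.sum_congr rfl (fun a _ => h2 a), Finset.sum_const_zero, zero_add] at h
        exact h
      have h3 : (∑ b : Fin (m+2), g (Sum.inr b) • (Real.exp Δ • iotaE b (vol (m+2))))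
          (fun j => ee (c.succAbove j)) = 0 := by
        rw [h1]; rfl
      rw [alt_sum_apply] at h3
      have h4 : ∀ b : Fin (m+2),
          (g (Sum.inr b) • (Real.exp Δ • iotaE b (vol (m+2)))) (fun j => ee (c.succAbove j))
          = if b = c then g (Sum.inr b) * Real.exp Δ * (-1:ℝ)^(c:ℕ) else 0 := by
        intro b
        rw [AlternatingMap.smul_apply, AlternatingMap.smul_apply, iotaE_apply,
          vol_cons_succAbove, smul_eq_mul, smul_eq_mul]
        split_ifs <;> ring
      rw [Finset.sum_congr rfl (fun b _ => h4 b),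
        Finset.sum_ite_eq' Finset.univ c
          (fun b => g (Sum.inr b) * Real.exp Δ * (-1:ℝ)^(c:ℕ))] at h3
      simp only [Finset.mem_univ, if_true, mul_eq_zero] at h3
      rcases h3 with (h3 | h3) | h3
      · exact h3
      · exact absurd h3 (Real.exp_ne_zero Δ)
      · exact absurd h3 (pow_ne_zero _ (by norm_num))
    intro i
    rcases i with a | b
    · exact hfst a
    · exact hsnd b
  · rw [Submodule.eq_top_iff']
    rintro ⟨η, τ⟩
    have hexp : Real.exp (-Δ) * Real.exp Δ = 1 := by
      rw [← Real.exp_add]; simp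
    set c : Fin (m+2) → ℝ := fun a => Real.exp (-Δ) * η (fun _ => ee a) with hc
    set K : Form (m+2) (m+1) := ∑ a : Fin (m+2),
      (c a * Real.exp Δ) • Form.castDeg (Nat.add_comm 1 m) (wedge (dy a) (sform A)) with hK
    set ρ : Form (m+2) (m+1) := τ - K with hρ
    set d : Fin (m+2) → ℝ :=
      fun b => Real.exp (-Δ) * ((-1:ℝ)^(b:ℕ) * ρ (fun j => ee (b.succAbove j))) with hd
    have hdecomp : ((η, τ) : Wsp (m+1))
        = ∑ a : Fin (m+2), c a • E a + ∑ b : Fin (m+2), d b • E' b := by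
      have hfst : (∑ a : Fin (m+2), c a • E a + ∑ b : Fin (m+2), d b • E' b).1 = η := by
        rw [Prod.fst_add, Prod.fst_sum, Prod.fst_sum]
        have t1 : ∀ a : Fin (m+2), (c a • E a).1 = η (fun _ => ee a) • dy a := by
          intro a
          show c a • (Real.exp Δ • dy a) = _
          rw [smul_smul, hc]
          congr 1
          calc Real.exp (-Δ) * η (fun _ => ee a) * Real.exp Δ
              = (Real.exp (-Δ) * Real.exp Δ) * η (fun _ => ee a) := by ring
            _ = η (fun _ => ee a) := by rw [hexp, one_mul]
        have t2 : ∀ b : Fin (m+2), (d b • E' b).1 = 0 := by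
          intro b
          show d b • (Real.exp Δ • (0 : Form (m+2) 1)) = 0
          rw [smul_zero, smul_zero]
        rw [Finset.sum_congr rfl (fun a _ => t1 a), Finset.sum_congr rfl (fun b _ => t2 b),
          Finset.sum_const_zero, add_zero, ← oneform_decomp]
      have hsnd : (∑ a : Fin (m+2), c a • E a + ∑ b : Fin (m+2), d b • E' b).2 = τ := by
        rw [Prod.snd_add, Prod.snd_sum, Prod.snd_sum]
        have t1 : ∀ a : Fin (m+2), (c a • E a).2
            = (c a * Real.exp Δ) • Form.castDeg (Nat.add_comm 1 m) (wedge (dy a) (sform A)) := by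
          intro a
          show c a • (Real.exp Δ • Form.castDeg (Nat.add_comm 1 m) (wedge (dy a) (sform A))) = _
          rw [smul_smul]
        have t2 : ∀ b : Fin (m+2), (d b • E' b).2
            = ((-1:ℝ)^(b:ℕ) * ρ (fun j => ee (b.succAbove j))) • iotaE b (vol (m+2)) := by
          intro b
          show d b • (Real.exp Δ • iotaE b (vol (m+2))) = _
          rw [smul_smul, hd]
          congr 1
          calc Real.exp (-Δ) * ((-1:ℝ)^(b:ℕ) * ρ (fun j => ee (b.succAbove j))) * Real.exp Δ
              = (Real.exp (-Δ) * Real.exp Δ)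
                  * ((-1:ℝ)^(b:ℕ) * ρ (fun j => ee (b.succAbove j))) := by ring
            _ = _ := by rw [hexp, one_mul]
        rw [Finset.sum_congr rfl (fun a _ => t1 a), Finset.sum_congr rfl (fun b _ => t2 b),
          ← hK, ← iotavol_decomp, hρ]
        abel
      exact Prod.ext_iff.mpr ⟨hfst.symm, hsnd.symm⟩
    rw [hdecomp]
    exact Submodule.add_mem _
      (Submodule.sum_mem _ fun a _ => Submodule.smul_mem _ _
        (Submodule.subset_span ⟨Sum.inl a, rfl⟩))
      (Submodule.sum_mem _ fun b _ => Submodule.smul_mem _ _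
        (Submodule.subset_span ⟨Sum.inr b, rfl⟩))


end
end

section
/- Let n ≥ 3 and H > 0 a real number, and consider the generalised metric of the p-brane background determined by g̃ = H^{2/(n−2)} δ, Ã = 0, and e^{2Δ̃} = H^{−2/(n−2)}: explicitly, on W set G'((η,η̃),(η',η̃')) := H^{2/(n−2)} ( ⟨η, η'⟩_H + ⟨η̃, η̃'⟩_H ), where ⟨dy^m, dy^k⟩_H = H^{−2/(n−2)} δ^{mk} on covectors and ⟨ι_{e_m}vol, ι_{e_k}vol⟩_H = H^{−2(n−1)/(n−2)} δ^{mk} on (n−1)-forms. Then the structure tensors Ξ^m := (dy^m, (−1)^{⌊n/2⌋} H ι_{e_m}vol) satisfy G'(Ξ^m, Ξ^k) = 2 δ^{mk}, independently of the value of H. (Thus the Ξ^m are G'-orthogonal of constant norm, so they define a genuine Spin(n) ⊂ Spin(n) × Spin(n) reduction compatible with the background generalised metric.) -/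
open scoped BigOperators

noncomputable section

section AuxLemmas
open Matrix

def consF {N : ℕ} (a : Fin (N+1)) (I : Fin N → Fin (N+1)) : Fin (N+1) → Fin (N+1) :=
  Fin.cons a I

lemma vol_comp_ee_eq_zero {n : ℕ} (J : Fin n → Fin n) (hJ : ¬ Function.Injective J) :
    vol n (fun j => ee (J j)) = 0 := by
  simp only [Function.Injective, not_forall] at hJ
  obtain ⟨i, j, hij, hne⟩ := hJ
  exact (vol n).map_eq_zero_of_eq _ (by rw [hij]) hne

lemma vol_comp_ee_sq {n : ℕ} (J : Fin n → Fin n) (hJ : Function.Injective J) :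
    vol n (fun j => ee (J j)) * vol n (fun j => ee (J j)) = 1 := by
  have hb : Function.Bijective J := Finite.injective_iff_bijective.mp hJ
  have hval : vol n (fun j => ee (J j)) =
      ((Equiv.Perm.sign (Equiv.ofBijective J hb) : ℤ) : ℝ) := by
    rw [vol, Module.Basis.det_apply]
    have hM : (Pi.basisFun ℝ (Fin n)).toMatrix (fun j => ee (J j)) =
        (Equiv.Perm.permMatrix ℝ (Equiv.ofBijective J hb))ᵀ := by
      ext i j
      simp [Module.Basis.toMatrix_apply, ee, Pi.single_apply, Equiv.Perm.permMatrix,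
        PEquiv.toMatrix_apply, Equiv.toPEquiv, Equiv.ofBijective, eq_comm]
    rw [hM, Matrix.det_transpose, Matrix.det_permutation]
  rw [hval, ← Int.cast_mul, ← Units.val_mul, Int.units_mul_self, Units.val_one, Int.cast_one]

lemma ipk_dy {n : ℕ} (a b : Fin n) : ipk (dy a) (dy b) = if a = b then 1 else 0 := by
  have h : ∀ I : Fin 1 → Fin n, dy a (fun j => ee (I j)) * dy b (fun j => ee (I j))
      = if I 0 = a then (if I 0 = b then (1:ℝ) else 0) else 0 := by
    intro I
    have ha : dy a (fun j => ee (I j)) = if I 0 = a then (1:ℝ) else 0 := by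
      show ee (I 0) a = _
      simp [ee, Pi.single_apply, eq_comm]
    have hb : dy b (fun j => ee (I j)) = if I 0 = b then (1:ℝ) else 0 := by
      show ee (I 0) b = _
      simp [ee, Pi.single_apply, eq_comm]
    rw [ha, hb]
    by_cases h1 : I 0 = a <;> by_cases h2 : I 0 = b <;> simp [h1, h2]
  rw [ipk]
  simp only [h]
  rw [← Equiv.sum_comp (Equiv.funUnique (Fin 1) (Fin n)).symm
    (fun I : Fin 1 → Fin n => if I 0 = a then (if I 0 = b then (1:ℝ) else 0) else 0)]
  simp [Equiv.funUnique, Finset.sum_ite_eq', Nat.factorial]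

lemma iotaE_vol_apply {N : ℕ} (a : Fin (N+1)) (I : Fin N → Fin (N+1)) :
    iotaE a (vol (N+1)) (fun j => ee (I j)) = vol (N+1) (fun j => ee (consF a I j)) := by
  show vol (N+1) (Matrix.vecCons (ee a) fun j => ee (I j)) = _
  congr 1
  ext j
  refine Fin.cases rfl (fun i => rfl) j

lemma vol_cross {N : ℕ} {a b : Fin (N+1)} (hab : a ≠ b) (I : Fin N → Fin (N+1)) :
    vol (N+1) (fun j => ee (consF a I j)) * vol (N+1) (fun j => ee (consF b I j)) = 0 := by
  by_cases ha : Function.Injective (consF a I)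
  · by_cases hb : Function.Injective (consF b I)
    · exfalso
      rw [consF, Fin.cons_injective_iff] at ha hb
      apply hab
      have hcard : (Finset.univ.image I).card = N := by
        rw [Finset.card_image_of_injective _ ha.2, Finset.card_univ, Fintype.card_fin]
      have hc : ((Finset.univ.image I)ᶜ).card = 1 := by
        rw [Finset.card_compl, hcard, Fintype.card_fin]; omega
      have haC : a ∈ (Finset.univ.image I)ᶜ := by
        simp only [Finset.mem_compl]
        intro h
        obtain ⟨j, -, hj⟩ := Finset.mem_image.mp h
        exact ha.1 ⟨j, hj⟩
      have hbC : b ∈ (Finset.univ.image I)ᶜ := by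
        simp only [Finset.mem_compl]
        intro h
        obtain ⟨j, -, hj⟩ := Finset.mem_image.mp h
        exact hb.1 ⟨j, hj⟩
      exact Finset.card_le_one.mp (le_of_eq hc) _ haC _ hbC
    · rw [vol_comp_ee_eq_zero _ hb, mul_zero]
  · rw [vol_comp_ee_eq_zero _ ha, zero_mul]

lemma vol_diag {N : ℕ} (a : Fin (N+1)) :
    ∑ I : Fin N → Fin (N+1),
      vol (N+1) (fun j => ee (consF a I j)) * vol (N+1) (fun j => ee (consF a I j))
      = (Nat.factorial N : ℝ) := by
  classical
  have h : ∀ I : Fin N → Fin (N+1),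
      vol (N+1) (fun j => ee (consF a I j)) * vol (N+1) (fun j => ee (consF a I j))
      = if Function.Injective (consF a I) then (1:ℝ) else 0 := by
    intro I
    by_cases hI : Function.Injective (consF a I)
    · rw [if_pos hI, vol_comp_ee_sq _ hI]
    · rw [if_neg hI, vol_comp_ee_eq_zero _ hI, mul_zero]
  simp only [h]
  rw [Finset.sum_boole]
  have e : {I : Fin N → Fin (N+1) // Function.Injective (consF a I)} ≃
      (Fin N ↪ {x : Fin (N+1) // x ≠ a}) :=
    { toFun := fun I => ⟨fun j => ⟨I.1 j, fun hj => (Fin.cons_injective_iff.mp I.2).1 ⟨j, hj⟩⟩,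
        fun x y hxy => (Fin.cons_injective_iff.mp I.2).2 (congrArg Subtype.val hxy)⟩,
      invFun := fun f => ⟨fun j => (f j).1, Fin.cons_injective_iff.mpr
        ⟨fun h => by obtain ⟨j, hj⟩ := h; exact (f j).2 hj,
         fun x y hxy => f.injective (Subtype.ext hxy)⟩⟩,
      left_inv := fun I => rfl,
      right_inv := fun f => rfl }
  have hcount : (Finset.univ.filter fun I => Function.Injective (consF a I)).card
      = Nat.factorial N := by
    rw [← Fintype.card_subtype, Fintype.card_congr e, Fintype.card_embedding_eq,
      Fintype.card_fin]
    have hsub : Fintype.card {x : Fin (N+1) // x ≠ a} = N := by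
      simp [Fintype.card_subtype_compl]
    rw [hsub, Nat.descFactorial_self]
  rw [hcount]

lemma ipk_iota {N : ℕ} (a b : Fin (N+1)) :
    ipk (iotaE a (vol (N+1))) (iotaE b (vol (N+1))) = if a = b then 1 else 0 := by
  rw [ipk]
  simp only [iotaE_vol_apply]
  rcases eq_or_ne a b with rfl | hab
  · rw [if_pos rfl, vol_diag a, inv_mul_cancel₀]
    exact_mod_cast Nat.factorial_ne_zero N
  · rw [if_neg hab]
    rw [Finset.sum_congr rfl fun I _ => vol_cross hab I]
    simp

lemma ipk_smul_smul {n k : ℕ} (c d : ℝ) (ω ω' : Form n k) :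
    ipk (c • ω) (d • ω') = (c * d) * ipk ω ω' := by
  simp only [ipk, AlternatingMap.smul_apply, smul_eq_mul]
  rw [show ∑ I : Fin k → Fin n, (c * ω fun j => ee (I j)) * (d * ω' fun j => ee (I j))
      = (c * d) * ∑ I : Fin k → Fin n, (ω fun j => ee (I j)) * (ω' fun j => ee (I j)) by
    rw [Finset.mul_sum]; exact Finset.sum_congr rfl fun I _ => by ring]
  ring

end AuxLemmas

/-- For `n ≥ 3` (written `n = p + 3`) and a real number `H > 0`, the
generalised metric of the `p`-brane background (`g̃ = H^{2/(n-2)} δ`, `Ã = 0`,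
`e^{2Δ̃} = H^{-2/(n-2)}`), namely
`G'((η,η̃),(η',η̃')) := H^{2/(n-2)}(⟨η,η'⟩_H + ⟨η̃,η̃'⟩_H)` with
`⟨·,·⟩_H = H^{-2/(n-2)}⟨·,·⟩` on covectors and `⟨·,·⟩_H = H^{-2(n-1)/(n-2)}⟨·,·⟩` on
`(n-1)`-forms, satisfies `G'(Ξ^m, Ξ^k) = 2 δ^{mk}` on the structure tensors
`Ξ^m := (dy^m, (-1)^{⌊n/2⌋} H ι_{e_m} vol)`, independently of the value of `H`. -/
theorem structure_tensors_Gprime_orthonormal (p : ℕ) (H : ℝ) (hH : 0 < H) :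
    let G' : Wsp (p + 2) → Wsp (p + 2) → ℝ := fun Y Y' =>
      H ^ ((2 : ℝ) / ((p : ℝ) + 1)) *
        (H ^ (-(2 : ℝ) / ((p : ℝ) + 1)) * ipk Y.1 Y'.1 +
          H ^ (-(2 * ((p : ℝ) + 2)) / ((p : ℝ) + 1)) * ipk Y.2 Y'.2)
    let Xi : Fin (p + 3) → Wsp (p + 2) := fun a =>
      (dy a, ((-1 : ℝ) ^ ((p + 3) / 2) * H) • iotaE a (vol (p + 3)))
    ∀ a b : Fin (p + 3), G' (Xi a) (Xi b) = 2 * if a = b then 1 else 0 := by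
  intro G' Xi a b
  have hne : ((p:ℝ) + 1) ≠ 0 := by positivity
  have hc : ((-1:ℝ) ^ ((p + 3) / 2) * H) * ((-1:ℝ) ^ ((p + 3) / 2) * H) = H * H := by
    have h : ((-1:ℝ) ^ ((p + 3) / 2)) * ((-1:ℝ) ^ ((p + 3) / 2)) = 1 := by
      rw [← pow_add, ← two_mul, pow_mul]; norm_num
    linear_combination H * H * h
  simp only [G', Xi]
  rw [ipk_dy, ipk_smul_smul, hc, ipk_iota]
  have h1 : H ^ ((2:ℝ)/((p:ℝ)+1)) * H ^ (-(2:ℝ)/((p:ℝ)+1)) = 1 := by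
    rw [← Real.rpow_add hH, show (2:ℝ)/((p:ℝ)+1) + -(2:ℝ)/((p:ℝ)+1) = 0 by ring]
    exact Real.rpow_zero H
  have h2 : H ^ ((2:ℝ)/((p:ℝ)+1)) * H ^ (-(2*((p:ℝ)+2))/((p:ℝ)+1)) * (H * H) = 1 := by
    have hHH : H * H = H ^ ((2:ℕ):ℝ) := by rw [Real.rpow_natCast]; ring
    rw [hHH, ← Real.rpow_add hH, ← Real.rpow_add hH,
      show (2:ℝ)/((p:ℝ)+1) + -(2*((p:ℝ)+2))/((p:ℝ)+1) + ((2:ℕ):ℝ) = 0 by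
        push_cast; field_simp; ring]
    exact Real.rpow_zero H
  linear_combination (if a = b then (1:ℝ) else 0) * h1 + (if a = b then (1:ℝ) else 0) * h2

end
end
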